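/- Let S = (−r_s, r_s) ⊂ ℝ, μ, β > 0, and let r : S ∖ {0} → [0,∞) be measurable with ∫_S r(p) dp < ∞ and ∫_S |p|^{2β} r(p) dp < ∞. Define R(u) = ∫_S r(p) e^{−μ|p|^{2β} u} dp for u ≥ 0. Then for every b ≠ 0 the improper integral 2∫_0^∞ R(u) cos(bu) du converges (as the limit of ∫_0^U as U → ∞) and equals ∫_S r(p) · 2μ|p|^{2β} / (μ²|p|^{4β} + b²) dp; in particular 0 ≤ 2∫_0^∞ R(u) cos(bu) du ≤ (2μ/b²) ∫_S |p|^{2β} r(p) dp. -/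

import Mathlib

open MeasureTheory Filter Topology

lemma intA (a b : ℝ) (hD : a^2+b^2 ≠ 0) (U : ℝ) :
    ∫ u in (0:ℝ)..U, Real.exp (-a*u) * Real.cos (b*u)
      = (Real.exp (-a*U) * (b*Real.sin (b*U) - a*Real.cos (b*U)) + a)/(a^2+b^2) := by
  have key : ∀ u : ℝ, HasDerivAt
      (fun u => Real.exp (-a*u) * (b*Real.sin (b*u) - a*Real.cos (b*u))/(a^2+b^2))
      (Real.exp (-a*u) * Real.cos (b*u)) u := by
    intro u
    have he : HasDerivAt (fun u : ℝ => Real.exp (-a*u)) (Real.exp (-a*u) * (-a)) u :=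
      by simpa using ((hasDerivAt_id u).const_mul (-a)).exp
    have hs : HasDerivAt (fun u : ℝ => Real.sin (b*u)) (Real.cos (b*u) * b) u :=
      by simpa using ((hasDerivAt_id u).const_mul b).sin
    have hc : HasDerivAt (fun u : ℝ => Real.cos (b*u)) (-Real.sin (b*u) * b) u :=
      by simpa using ((hasDerivAt_id u).const_mul b).cos
    have h2 : HasDerivAt (fun u : ℝ => b*Real.sin (b*u) - a*Real.cos (b*u))
        (b*(Real.cos (b*u)*b) - a*(-Real.sin (b*u)*b)) u :=
      (hs.const_mul b).sub (hc.const_mul a)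
    have h3 := (he.mul h2).div_const (a^2+b^2)
    exact h3.congr_deriv (by rw [div_eq_iff hD]; ring)
  rw [intervalIntegral.integral_eq_sub_of_hasDerivAt (fun u _ => key u)
    (((Real.continuous_exp.comp (continuous_const.mul continuous_id)).mul
      (Real.continuous_cos.comp (continuous_const.mul continuous_id))).intervalIntegrable 0 U)]
  simp
  ring

/-- For `S = (−r_s, r_s)`, `μ, β > 0`, `r ≥ 0` measurable with
`∫_S r < ∞` and `∫_S |p|^{2β} r < ∞`, and `R(u) = ∫_S r(p) e^{−μ|p|^{2β} u} dp`,
for every `b ≠ 0` the improper integral `2∫_0^∞ R(u) cos(bu) du` converges and equals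
`∫_S r(p)·2μ|p|^{2β}/(μ²|p|^{4β}+b²) dp`; in particular this value lies in
`[0, (2μ/b²)∫_S |p|^{2β} r(p) dp]`. -/
theorem stmt_13 (rs : ℝ) (hrs : 0 < rs) (μ β : ℝ) (hμ : 0 < μ) (hβ : 0 < β)
    (r : ℝ → ℝ) (hrmeas : Measurable r)
    (hrpos : ∀ p ∈ Set.Ioo (-rs) rs \ {0}, 0 ≤ r p)
    (hrint : IntegrableOn r (Set.Ioo (-rs) rs))
    (hrint2 : IntegrableOn (fun p => |p| ^ (2 * β) * r p) (Set.Ioo (-rs) rs)) :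
    ∀ b : ℝ, b ≠ 0 →
      Tendsto (fun U => 2 * ∫ u in (0:ℝ)..U,
          (∫ p in Set.Ioo (-rs) rs, r p * Real.exp (-μ * |p| ^ (2 * β) * u)) * Real.cos (b * u))
        atTop
        (𝓝 (∫ p in Set.Ioo (-rs) rs,
          r p * (2 * μ * |p| ^ (2 * β) / (μ ^ 2 * |p| ^ (4 * β) + b ^ 2)))) ∧
      0 ≤ (∫ p in Set.Ioo (-rs) rs,
          r p * (2 * μ * |p| ^ (2 * β) / (μ ^ 2 * |p| ^ (4 * β) + b ^ 2))) ∧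
      (∫ p in Set.Ioo (-rs) rs,
          r p * (2 * μ * |p| ^ (2 * β) / (μ ^ 2 * |p| ^ (4 * β) + b ^ 2)))
        ≤ (2 * μ / b ^ 2) * ∫ p in Set.Ioo (-rs) rs, |p| ^ (2 * β) * r p := by
  intro b hb
  set S := Set.Ioo (-rs) rs with hS
  set a : ℝ → ℝ := fun p => μ * |p| ^ (2 * β) with ha
  have hb2 : (0:ℝ) < b ^ 2 := pow_two_pos_of_ne_zero hb
  have hanneg : ∀ p, 0 ≤ a p := fun p =>
    mul_nonneg hμ.le (Real.rpow_nonneg (abs_nonneg p) _)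
  have hx4 : ∀ p : ℝ, μ ^ 2 * |p| ^ (4 * β) + b ^ 2 = (a p) ^ 2 + b ^ 2 := by
    intro p
    have : |p| ^ (4 * β) = (|p| ^ (2 * β)) ^ (2:ℕ) := by
      rw [← Real.rpow_natCast (|p| ^ (2 * β)) 2, ← Real.rpow_mul (abs_nonneg p)]
      norm_num
      ring_nf
    rw [this, ha]; ring
  have hDpos : ∀ p, 0 < (a p) ^ 2 + b ^ 2 := fun p =>
    add_pos_of_nonneg_of_pos (sq_nonneg _) hb2
  have hDne : ∀ p, (a p) ^ 2 + b ^ 2 ≠ 0 := fun p => (hDpos p).ne'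
  have hameas : Measurable a :=
    ((Real.continuous_rpow_const (by positivity)).comp continuous_abs).measurable.const_mul μ
  -- a.e. facts
  have hne0 : ∀ᵐ p ∂(volume.restrict S), p ≠ (0:ℝ) := by
    rw [ae_iff]
    refine measure_mono_null (fun p hp => ?_) (by
      rw [Measure.restrict_apply (measurableSet_singleton (0:ℝ))]
      exact measure_mono_null Set.inter_subset_left (Real.volume_singleton))
    simpa using hp
  have hmem : ∀ᵐ p ∂(volume.restrict S), p ∈ S := ae_restrict_mem measurableSet_Ioo
  have hrnn : ∀ᵐ p ∂(volume.restrict S), 0 ≤ r p := by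
    filter_upwards [hne0, hmem] with p hp hpm
    exact hrpos p ⟨hpm, hp⟩
  -- limit function, halved
  set L : ℝ → ℝ := fun p => r p * (μ * |p| ^ (2 * β) / (μ ^ 2 * |p| ^ (4 * β) + b ^ 2)) with hL
  have htargetL : (∫ p in S, r p * (2 * μ * |p| ^ (2 * β) / (μ ^ 2 * |p| ^ (4 * β) + b ^ 2)))
      = 2 * ∫ p in S, L p := by
    rw [← integral_const_mul]
    refine integral_congr_ae (Eventually.of_forall fun p => ?_)
    simp only [hL]; ring
  -- ψ
  set ψ : ℝ → ℝ → ℝ := fun p U =>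
    (Real.exp (-(a p)*U) * (b*Real.sin (b*U) - (a p)*Real.cos (b*U)) + a p)/((a p)^2+b^2)
    with hψ
  -- Fubini step
  have hfub : ∀ U : ℝ, 0 ≤ U →
      (∫ u in (0:ℝ)..U, (∫ p in S, r p * Real.exp (-μ * |p| ^ (2 * β) * u)) * Real.cos (b * u))
        = ∫ p in S, r p * ψ p U := by
    intro U hU
    rw [intervalIntegral.integral_of_le hU]
    have step1 : ∀ u : ℝ, (∫ p in S, r p * Real.exp (-μ * |p| ^ (2 * β) * u)) * Real.cos (b*u)
        = ∫ p in S, r p * (Real.exp (-(a p) * u) * Real.cos (b*u)) := by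
      intro u
      rw [← integral_mul_const]
      refine integral_congr_ae (Eventually.of_forall fun p => ?_)
      simp only [ha, neg_mul, mul_assoc]
    simp_rw [step1]
    have hprod : Integrable
        (Function.uncurry fun u p => r p * (Real.exp (-(a p) * u) * Real.cos (b*u)))
        ((volume.restrict (Set.Ioc 0 U)).prod (volume.restrict S)) := by
      have hg : Integrable (fun z : ℝ × ℝ => (1:ℝ) * |r z.2|)
          ((volume.restrict (Set.Ioc 0 U)).prod (volume.restrict S)) := by
        haveI : IsFiniteMeasure (volume.restrict (Set.Ioc (0:ℝ) U)) :=
          ⟨by rw [Measure.restrict_apply_univ, Real.volume_Ioc]; exact ENNReal.ofReal_lt_top⟩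
        exact (integrable_const (1:ℝ)).mul_prod hrint.abs
      refine Integrable.mono' hg ?_ ?_
      · exact (((hrmeas.comp measurable_snd).mul
          (((((hameas.comp measurable_snd).neg.mul measurable_fst).exp).mul
            ((measurable_fst.const_mul b).cos))))).aestronglyMeasurable
      · rw [Measure.prod_restrict]
        filter_upwards [ae_restrict_mem (measurableSet_Ioc.prod measurableSet_Ioo)] with z hz
        obtain ⟨u, p⟩ := z
        obtain ⟨hz1, _⟩ := hz
        have hu : (0:ℝ) ≤ u := le_of_lt hz1.1
        have he1 : Real.exp (-(a p) * u) ≤ 1 :=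
          Real.exp_le_one_iff.mpr (by nlinarith [hanneg p])
        have hc1 : |Real.cos (b * u)| ≤ 1 := Real.abs_cos_le_one _
        show ‖r p * (Real.exp (-(a p) * u) * Real.cos (b*u))‖ ≤ 1 * |r p|
        rw [Real.norm_eq_abs, abs_mul, abs_mul, Real.abs_exp, one_mul]
        calc |r p| * (Real.exp (-(a p) * u) * |Real.cos (b*u)|)
            ≤ |r p| * 1 := by
              refine mul_le_mul_of_nonneg_left ?_ (abs_nonneg _)
              exact mul_le_one₀ he1 (abs_nonneg _) hc1
          _ = |r p| := mul_one _
    rw [integral_integral_swap hprod]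
    refine integral_congr_ae (Eventually.of_forall fun p => ?_)
    show (∫ u in Set.Ioc 0 U, r p * (Real.exp (-(a p) * u) * Real.cos (b*u))) = r p * ψ p U
    rw [integral_const_mul, ← intervalIntegral.integral_of_le hU, intA (a p) b (hDne p) U]
  -- pointwise limit of ψ
  have hψlim : ∀ p : ℝ, p ≠ 0 → Tendsto (fun U => ψ p U) atTop (𝓝 ((a p)/((a p)^2+b^2))) := by
    intro p hp
    have hapos : 0 < a p := mul_pos hμ (Real.rpow_pos_of_pos (abs_pos.mpr hp) _)
    have hexp : Tendsto (fun U : ℝ => Real.exp (-(a p)*U)) atTop (𝓝 0) := by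
      refine Real.tendsto_exp_atBot.comp ?_
      exact (tendsto_const_mul_atBot_of_neg
        (neg_lt_zero.mpr hapos : -(a p) < 0)).2 (tendsto_id (α := ℝ))
    have hzero : Tendsto
        (fun U : ℝ => Real.exp (-(a p)*U) * (b*Real.sin (b*U) - (a p)*Real.cos (b*U)))
        atTop (𝓝 0) := by
      have hbd2 : Tendsto (fun U : ℝ => (|b| + a p) * Real.exp (-(a p)*U)) atTop
          (𝓝 ((|b| + a p) * 0)) := hexp.const_mul _
      rw [mul_zero] at hbd2
      refine squeeze_zero_norm (fun U => ?_) hbd2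
      have hXbd : |b*Real.sin (b*U) - (a p)*Real.cos (b*U)| ≤ |b| + a p := by
        calc |b*Real.sin (b*U) - (a p)*Real.cos (b*U)|
            ≤ |b*Real.sin (b*U)| + |(a p)*Real.cos (b*U)| := abs_sub _ _
          _ ≤ |b| * 1 + a p * 1 := by
              rw [abs_mul, abs_mul, abs_of_pos hapos]
              exact add_le_add (mul_le_mul_of_nonneg_left (Real.abs_sin_le_one _) (abs_nonneg b))
                (mul_le_mul_of_nonneg_left (Real.abs_cos_le_one _) hapos.le)
          _ = |b| + a p := by ring
      rw [Real.norm_eq_abs, abs_mul, Real.abs_exp, mul_comm]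
      exact mul_le_mul_of_nonneg_right hXbd (Real.exp_nonneg _)
    have h := ((hzero.add_const (a p)).div_const ((a p)^2+b^2))
    rw [zero_add] at h
    exact h
  -- DCT
  have hbd : ∀ p : ℝ, ∀ U : ℝ, 0 ≤ U → ‖r p * ψ p U‖ ≤
      (|b|/b^2) * |r p| + (2*μ/b^2) * (|p| ^ (2*β) * |r p|) := by
    intro p U hU
    have hnum : |Real.exp (-(a p)*U) * (b*Real.sin (b*U) - (a p)*Real.cos (b*U)) + a p|
        ≤ |b| + 2 * a p := by
      have he1 : Real.exp (-(a p)*U) ≤ 1 :=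
        Real.exp_le_one_iff.mpr (by nlinarith [hanneg p])
      calc |Real.exp (-(a p)*U) * (b*Real.sin (b*U) - (a p)*Real.cos (b*U)) + a p|
          ≤ |Real.exp (-(a p)*U) * (b*Real.sin (b*U) - (a p)*Real.cos (b*U))| + |a p| :=
            abs_add_le _ _
        _ ≤ 1 * (|b| + a p) + a p := by
            rw [abs_mul, Real.abs_exp, abs_of_nonneg (hanneg p)]
            refine add_le_add (mul_le_mul he1 ?_ (abs_nonneg _) zero_le_one) le_rfl
            calc |b*Real.sin (b*U) - (a p)*Real.cos (b*U)|
                ≤ |b*Real.sin (b*U)| + |(a p)*Real.cos (b*U)| := abs_sub _ _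
              _ ≤ |b| * 1 + a p * 1 := by
                  rw [abs_mul, abs_mul, abs_of_nonneg (hanneg p)]
                  exact add_le_add
                    (mul_le_mul_of_nonneg_left (Real.abs_sin_le_one _) (abs_nonneg b))
                    (mul_le_mul_of_nonneg_left (Real.abs_cos_le_one _) (hanneg p))
              _ = |b| + a p := by ring
        _ = |b| + 2 * a p := by ring
    have hψbd : |ψ p U| ≤ (|b| + 2 * a p) / b^2 := by
      rw [hψ, abs_div, abs_of_pos (hDpos p)]
      calc _ ≤ (|b| + 2 * a p) / ((a p)^2 + b^2) :=
            div_le_div_of_nonneg_right hnum (hDpos p).le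
        _ ≤ (|b| + 2 * a p) / b^2 := by
            refine div_le_div_of_nonneg_left ?_ hb2 (le_add_of_nonneg_left (sq_nonneg _))
            positivity
    rw [Real.norm_eq_abs, abs_mul]
    calc |r p| * |ψ p U| ≤ |r p| * ((|b| + 2 * a p) / b^2) :=
          mul_le_mul_of_nonneg_left hψbd (abs_nonneg _)
      _ = (|b|/b^2) * |r p| + (2*μ/b^2) * (|p| ^ (2*β) * |r p|) := by
          rw [ha]; ring
  have habs2 : IntegrableOn (fun p => |p| ^ (2 * β) * |r p|) S := by
    refine hrint2.congr ?_
    filter_upwards [hrnn] with p hp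
    rw [abs_of_nonneg hp]
  have hgint : IntegrableOn
      (fun p => (|b|/b^2) * |r p| + (2*μ/b^2) * (|p| ^ (2*β) * |r p|)) S :=
    (hrint.abs.const_mul _).add (habs2.const_mul _)
  have hψmeas : ∀ U : ℝ, AEStronglyMeasurable (fun p => r p * ψ p U) (volume.restrict S) := by
    intro U
    refine (hrmeas.mul ?_).aestronglyMeasurable
    have : Measurable fun p => (Real.exp (-(a p)*U) * (b*Real.sin (b*U) - (a p)*Real.cos (b*U))
        + a p) / ((a p)^2 + b^2) :=
      (((hameas.neg.mul_const U).exp.mul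
        (measurable_const.sub (hameas.mul_const (Real.cos (b*U))))).add hameas).div
        ((hameas.pow_const 2).add measurable_const)
    exact this
  -- DCT conclusion
  have hHlim : Tendsto (fun U => ∫ p in S, r p * ψ p U) atTop (𝓝 (∫ p in S, L p)) := by
    refine tendsto_integral_filter_of_dominated_convergence
      (fun p => (|b|/b^2) * |r p| + (2*μ/b^2) * (|p| ^ (2*β) * |r p|))
      (Eventually.of_forall hψmeas) ?_ hgint ?_
    · filter_upwards [eventually_ge_atTop (0:ℝ)] with U hU
      exact Eventually.of_forall fun p => hbd p U hU
    · filter_upwards [hne0] with p hp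
      have hT := (hψlim p hp).const_mul (r p)
      have hval : L p = r p * ((a p)/((a p)^2+b^2)) := by
        simp only [hL]
        rw [hx4 p]
      rw [hval]
      exact hT
  have hmain : Tendsto (fun U => 2 * ∫ u in (0:ℝ)..U,
      (∫ p in S, r p * Real.exp (-μ * |p| ^ (2 * β) * u)) * Real.cos (b * u))
      atTop (𝓝 (∫ p in S, r p * (2 * μ * |p| ^ (2 * β) / (μ ^ 2 * |p| ^ (4 * β) + b ^ 2)))) := by
    rw [htargetL]
    refine Tendsto.congr' ?_ (hHlim.const_mul 2)
    filter_upwards [eventually_ge_atTop (0:ℝ)] with U hU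
    exact congrArg (fun x => 2 * x) (hfub U hU).symm
  have hnn : ∀ᵐ p ∂(volume.restrict S),
      0 ≤ r p * (2 * μ * |p| ^ (2 * β) / (μ ^ 2 * |p| ^ (4 * β) + b ^ 2)) := by
    filter_upwards [hrnn] with p hp
    have hden : 0 < μ^2*|p|^(4*β)+b^2 := by rw [hx4 p]; exact hDpos p
    exact mul_nonneg hp (div_nonneg
      (mul_nonneg (mul_nonneg (by norm_num) hμ.le) (Real.rpow_nonneg (abs_nonneg p) _))
      hden.le)
  refine ⟨hmain, integral_nonneg_of_ae hnn, ?_⟩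
  rw [← integral_const_mul]
  refine integral_mono_of_nonneg hnn (hrint2.const_mul _) ?_
  filter_upwards [hrnn] with p hp
  have hx2 : (0:ℝ) ≤ |p| ^ (2*β) := Real.rpow_nonneg (abs_nonneg p) _
  have hden1 : b^2 ≤ μ^2*|p|^(4*β)+b^2 :=
    le_add_of_nonneg_left (mul_nonneg (sq_nonneg μ) (Real.rpow_nonneg (abs_nonneg p) _))
  calc r p * (2 * μ * |p| ^ (2 * β) / (μ ^ 2 * |p| ^ (4 * β) + b ^ 2))
      ≤ r p * (2 * μ * |p| ^ (2 * β) / b ^ 2) := by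
        refine mul_le_mul_of_nonneg_left ?_ hp
        exact div_le_div_of_nonneg_left
          (mul_nonneg (mul_nonneg (by norm_num) hμ.le) hx2) hb2 hden1
    _ = 2 * μ / b ^ 2 * (|p| ^ (2 * β) * r p) := by ring
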